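/- For every integer m ≥ 1, the Davenport–Heilbronn completed functions have the explicit odd-integer values ξ_±(2m+1) = ∓ (2·(−1)^m/(2m+1)!!)·[ B_{2m+1}(1/5) + τ_±·B_{2m+1}(2/5) ]·√π·(10π)^m, where B_k(·) is the k-th Bernoulli polynomial and (2m+1)!! = 1·3·5···(2m+1). -/

import Mathlib

open Complex HurwitzZeta

/-- The golden ratio `φ = (1+√5)/2`. -/
noncomputable def goldenPhi : ℝ := (1 + Real.sqrt 5) / 2

/-- `τ₊ := -φ + √(1+φ²)`. -/
noncomputable def tauPlus : ℝ := -goldenPhi + Real.sqrt (1 + goldenPhi ^ 2)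

/-- `τ₋ := -φ - √(1+φ²)`. -/
noncomputable def tauMinus : ℝ := -goldenPhi - Real.sqrt (1 + goldenPhi ^ 2)

/-- The Davenport–Heilbronn function with parameter `τ`:
`f_τ(x) := 5^(-x)·[ζ(x,1/5) + τ·(ζ(x,2/5) - ζ(x,3/5)) - ζ(x,4/5)]`,
where `ζ(x,a)` is the Hurwitz zeta function. -/
noncomputable def fDH (τ : ℝ) (x : ℂ) : ℂ :=
  (5 : ℂ) ^ (-x) * (hurwitzZeta ((1 / 5 : ℝ) : UnitAddCircle) x +
    (τ : ℂ) * (hurwitzZeta ((2 / 5 : ℝ) : UnitAddCircle) x -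
      hurwitzZeta ((3 / 5 : ℝ) : UnitAddCircle) x) -
    hurwitzZeta ((4 / 5 : ℝ) : UnitAddCircle) x)

/-- The completed Davenport–Heilbronn function
`ξ_τ(x) := (π/5)^(-x/2)·Γ((1+x)/2)·f_τ(x)`. -/
noncomputable def xiDH (τ : ℝ) (x : ℂ) : ℂ :=
  ((Real.pi / 5 : ℝ) : ℂ) ^ (-x / 2) * Complex.Gamma ((1 + x) / 2) * fDH τ x

/-- The right-hand side `(2·(-1)^m/(2m+1)!!)·[B_{2m+1}(1/5) + τ·B_{2m+1}(2/5)]·√π·(10π)^m`,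
where `B_k(·)` is the `k`-th Bernoulli polynomial and `(2m+1)!!` the double factorial. -/
noncomputable def dhOddValue (τ : ℝ) (m : ℕ) : ℝ :=
  2 * (-1 : ℝ) ^ m / (Nat.doubleFactorial (2 * m + 1) : ℝ) *
    (Polynomial.aeval (1 / 5 : ℝ) (Polynomial.bernoulli (2 * m + 1)) +
      τ * Polynomial.aeval (2 / 5 : ℝ) (Polynomial.bernoulli (2 * m + 1))) *
    Real.sqrt Real.pi * (10 * Real.pi) ^ m

open Complex HurwitzZeta Real ZMod

noncomputable def Phi (τ : ℝ) : ZMod 5 → ℂ := ![0, 1, (τ:ℂ), -(τ:ℂ), -1]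

variable {τ ε : ℝ}

lemma sqrt5_sq : Real.sqrt 5 ^ 2 = 5 := Real.sq_sqrt (by norm_num)

lemma v_pos : 0 < Real.sin (π/5) := Real.sin_pos_of_pos_of_lt_pi (by positivity)
  (by nlinarith [Real.pi_pos])

lemma u_eq : Real.sin (2*π/5) = goldenPhi * Real.sin (π/5) := by
  rw [show (2:ℝ)*π/5 = 2*(π/5) by ring, Real.sin_two_mul, Real.cos_pi_div_five]
  unfold goldenPhi; ring

lemma s4_eq : Real.sin (4*π/5) = Real.sin (π/5) := by
  rw [show (4:ℝ)*π/5 = π - π/5 by ring, Real.sin_pi_sub]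

lemma v_sq : Real.sin (π/5) ^ 2 * (1 + goldenPhi ^ 2) = 5/4 := by
  have h1 : Real.sin (π/5) ^ 2 = 1 - Real.cos (π/5)^2 := by
    nlinarith [Real.sin_sq_add_cos_sq (π/5)]
  rw [h1, Real.cos_pi_div_five, show 1 + goldenPhi ^ 2 = (5 + Real.sqrt 5)/2 by
    unfold goldenPhi; nlinarith [sqrt5_sq]]
  nlinarith [sqrt5_sq]

lemma two_v_sqrt : 2 * Real.sin (π/5) * Real.sqrt (1 + goldenPhi ^ 2) = Real.sqrt 5 := by
  have h1 : Real.sqrt (1 + goldenPhi ^ 2) ^ 2 = 1 + goldenPhi ^ 2 :=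
    Real.sq_sqrt (by positivity)
  have h2 : (0:ℝ) ≤ 2 * Real.sin (π/5) * Real.sqrt (1 + goldenPhi ^ 2) := by
    have := v_pos; positivity
  nlinarith [Real.sq_sqrt (show (0:ℝ) ≤ 5 by norm_num), Real.sqrt_nonneg 5, v_sq, h1, h2,
    sq_nonneg (2 * Real.sin (π/5) * Real.sqrt (1 + goldenPhi ^ 2) - Real.sqrt 5)]

lemma tau_quad (hτ : goldenPhi + τ = ε * Real.sqrt (1 + goldenPhi ^ 2))
    (hε : ε = 1 ∨ ε = -1) : τ ^ 2 + 2 * goldenPhi * τ = 1 := by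
  have h1 : Real.sqrt (1 + goldenPhi ^ 2) ^ 2 = 1 + goldenPhi ^ 2 :=
    Real.sq_sqrt (by positivity)
  have hε2 : ε ^ 2 = 1 := by rcases hε with rfl | rfl <;> norm_num
  linear_combination (goldenPhi + τ + ε * Real.sqrt (1 + goldenPhi ^ 2)) * hτ
    + ε^2 * h1 + (1 + goldenPhi^2) * hε2

lemma RA (hτ : goldenPhi + τ = ε * Real.sqrt (1 + goldenPhi ^ 2)) :
    2*(Real.sin (2*π/5) + τ * Real.sin (4*π/5)) = ε * Real.sqrt 5 := by
  rw [s4_eq, u_eq]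
  linear_combination 2 * Real.sin (π/5) * hτ + ε * two_v_sqrt

lemma RB (hτ : goldenPhi + τ = ε * Real.sqrt (1 + goldenPhi ^ 2))
    (hε : ε = 1 ∨ ε = -1) :
    2*(Real.sin (4*π/5) - τ * Real.sin (2*π/5)) = ε * Real.sqrt 5 * τ := by
  rw [s4_eq, u_eq]
  linear_combination (-2) * Real.sin (π/5) * tau_quad hτ hε + 2 * Real.sin (π/5) * τ * hτ
    + ε * τ * two_v_sqrt

lemma charval (x : ℝ) : cexp ((x:ℂ) * I) = (Real.cos x : ℂ) + (Real.sin x : ℂ) * I := by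
  rw [Complex.exp_mul_I, Complex.ofReal_cos, Complex.ofReal_sin]

lemma E_int (r : ℤ) : stdAddChar ((r : ZMod 5)) =
    (Real.cos (2*π*r/5) : ℂ) + (Real.sin (2*π*r/5) : ℂ) * I := by
  rw [ZMod.stdAddChar_coe,
    show 2*(π:ℂ)*I*(r:ℂ)/((5:ℕ):ℂ) = ((2*π*r/5 : ℝ):ℂ) * I by push_cast; ring, charval]

lemma E0 : stdAddChar ((0 : ZMod 5)) = 1 := AddChar.map_zero_eq_one _

lemma E1 : stdAddChar ((1 : ZMod 5)) = (Real.cos (2*π/5) : ℂ) + (Real.sin (2*π/5) : ℂ) * I := by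
  have := E_int 1
  rw [show ((1:ℤ) : ZMod 5) = 1 by decide,
    show 2*π*((1:ℤ):ℝ)/5 = 2*π/5 by push_cast; ring] at this
  exact this

lemma E2 : stdAddChar ((2 : ZMod 5)) = (Real.cos (4*π/5) : ℂ) + (Real.sin (4*π/5) : ℂ) * I := by
  have := E_int 2
  rw [show ((2:ℤ) : ZMod 5) = 2 by decide,
    show 2*π*((2:ℤ):ℝ)/5 = 4*π/5 by push_cast; ring] at this
  exact this

lemma E3 : stdAddChar ((3 : ZMod 5)) = (Real.cos (4*π/5) : ℂ) - (Real.sin (4*π/5) : ℂ) * I := by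
  have := E_int (-2)
  rw [show ((-2:ℤ) : ZMod 5) = 3 by decide,
    show 2*π*((-2:ℤ):ℝ)/5 = -(4*π/5) by push_cast; ring, Real.cos_neg, Real.sin_neg] at this
  rw [this]; push_cast; ring

lemma E4 : stdAddChar ((4 : ZMod 5)) = (Real.cos (2*π/5) : ℂ) - (Real.sin (2*π/5) : ℂ) * I := by
  have := E_int (-1)
  rw [show ((-1:ℤ) : ZMod 5) = 4 by decide,
    show 2*π*((-1:ℤ):ℝ)/5 = -(2*π/5) by push_cast; ring, Real.cos_neg, Real.sin_neg] at this
  rw [this]; push_cast; ring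

lemma sum_expand (τ : ℝ) (f : ZMod 5 → ℂ) : ∑ j : ZMod 5, Phi τ j * f j =
    f 1 + τ * f 2 - τ * f 3 - f 4 := by
  rw [show ∑ j : ZMod 5, Phi τ j * f j = ∑ j : Fin 5, Phi τ j * f j from rfl,
    Fin.sum_univ_five]
  show (0:ℂ) * f 0 + 1 * f 1 + (τ:ℂ) * f 2 + (-(τ:ℂ)) * f 3 + (-1:ℂ) * f 4 = _
  ring

lemma eigen (hτ : goldenPhi + τ = ε * Real.sqrt (1 + goldenPhi ^ 2))
    (hε : ε = 1 ∨ ε = -1) (k : ZMod 5) :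
    ∑ j : ZMod 5, Phi τ j * stdAddChar (j * k) =
      ((ε * Real.sqrt 5 : ℝ) : ℂ) * I * Phi τ k := by
  have hA := RA hτ
  have hB := RB hτ hε
  have hA' := congrArg (Complex.ofReal) hA
  have hB' := congrArg (Complex.ofReal) hB
  push_cast at hA' hB'
  rw [sum_expand τ (fun j => stdAddChar (j * k))]
  fin_cases k
  · show stdAddChar (1*0) + _ * stdAddChar (2*0) - _ * stdAddChar (3*0) - stdAddChar (4*0)
      = _ * Phi τ 0
    rw [show (1*0 : ZMod 5) = 0 by decide, show (2*0 : ZMod 5) = 0 by decide,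
      show (3*0 : ZMod 5) = 0 by decide, show (4*0 : ZMod 5) = 0 by decide, E0]
    show _ = _ * (0:ℂ)
    ring
  · show stdAddChar (1*1) + _ * stdAddChar (2*1) - _ * stdAddChar (3*1) - stdAddChar (4*1)
      = _ * Phi τ 1
    rw [show (1*1 : ZMod 5) = 1 by decide, show (2*1 : ZMod 5) = 2 by decide,
      show (3*1 : ZMod 5) = 3 by decide, show (4*1 : ZMod 5) = 4 by decide, E1, E2, E3, E4]
    show _ = _ * (1:ℂ)
    push_cast
    linear_combination I * hA'
  · show stdAddChar (1*2) + _ * stdAddChar (2*2) - _ * stdAddChar (3*2) - stdAddChar (4*2)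
      = _ * Phi τ 2
    rw [show (1*2 : ZMod 5) = 2 by decide, show (2*2 : ZMod 5) = 4 by decide,
      show (3*2 : ZMod 5) = 1 by decide, show (4*2 : ZMod 5) = 3 by decide, E1, E2, E3, E4]
    show _ = _ * ((τ:ℝ):ℂ)
    push_cast
    linear_combination I * hB'
  · show stdAddChar (1*3) + _ * stdAddChar (2*3) - _ * stdAddChar (3*3) - stdAddChar (4*3)
      = _ * Phi τ 3
    rw [show (1*3 : ZMod 5) = 3 by decide, show (2*3 : ZMod 5) = 1 by decide,
      show (3*3 : ZMod 5) = 4 by decide, show (4*3 : ZMod 5) = 2 by decide, E1, E2, E3, E4]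
    show _ = _ * (-((τ:ℝ):ℂ))
    push_cast
    linear_combination (-I) * hB'
  · show stdAddChar (1*4) + _ * stdAddChar (2*4) - _ * stdAddChar (3*4) - stdAddChar (4*4)
      = _ * Phi τ 4
    rw [show (1*4 : ZMod 5) = 4 by decide, show (2*4 : ZMod 5) = 3 by decide,
      show (3*4 : ZMod 5) = 2 by decide, show (4*4 : ZMod 5) = 1 by decide, E1, E2, E3, E4]
    show _ = _ * (-1:ℂ)
    push_cast
    linear_combination (-I) * hA'

lemma key (hτ : goldenPhi + τ = ε * Real.sqrt (1 + goldenPhi ^ 2))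
    (hε : ε = 1 ∨ ε = -1) {s : ℂ} (hs : s ≠ 1) :
    ∑ j : ZMod 5, Phi τ j * expZeta (ZMod.toAddCircle j) s
      = ((ε * Real.sqrt 5 : ℝ) : ℂ) * I * ZMod.LFunction (Phi τ) s := by
  have step1 : ∑ j : ZMod 5, Phi τ j * expZeta (ZMod.toAddCircle j) s
      = ∑ j : ZMod 5, Phi τ j * ZMod.LFunction (fun k ↦ stdAddChar (j * k)) s := by
    refine Finset.sum_congr rfl fun j _ ↦ ?_
    rw [ZMod.LFunction_stdAddChar_eq_expZeta j s (Or.inr hs)]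
  rw [step1]
  have step2 : ∑ j : ZMod 5, Phi τ j * ZMod.LFunction (fun k ↦ stdAddChar (j * k)) s
      = ∑ j : ZMod 5, ∑ k : ZMod 5, Phi τ j * stdAddChar (j * k) *
        (((5:ℕ):ℂ) ^ (-s) * hurwitzZeta (ZMod.toAddCircle k) s) := by
    refine Finset.sum_congr rfl fun j _ ↦ ?_
    rw [ZMod.LFunction, Finset.mul_sum, Finset.mul_sum]
    exact Finset.sum_congr rfl fun k _ ↦ by ring
  rw [step2, Finset.sum_comm]
  have step3 : ∀ k : ZMod 5, ∑ j : ZMod 5, Phi τ j * stdAddChar (j * k) *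
        (((5:ℕ):ℂ) ^ (-s) * hurwitzZeta (ZMod.toAddCircle k) s)
      = ((ε * Real.sqrt 5 : ℝ) : ℂ) * I *
        (Phi τ k * (((5:ℕ):ℂ) ^ (-s) * hurwitzZeta (ZMod.toAddCircle k) s)) := by
    intro k
    rw [← Finset.sum_mul, eigen hτ hε k]
    ring
  rw [Finset.sum_congr rfl fun k _ ↦ step3 k, ZMod.LFunction, Finset.mul_sum,
    Finset.mul_sum]
  exact Finset.sum_congr rfl fun k _ ↦ by ring

lemma A1 : ZMod.toAddCircle (1 : ZMod 5) = ((1/5 : ℝ) : UnitAddCircle) := by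
  have := ZMod.toAddCircle_intCast (N := 5) 1
  rw [show ((1:ℤ) : ZMod 5) = 1 by decide] at this
  rw [this]; norm_num

lemma A2 : ZMod.toAddCircle (2 : ZMod 5) = ((2/5 : ℝ) : UnitAddCircle) := by
  have := ZMod.toAddCircle_intCast (N := 5) 2
  rw [show ((2:ℤ) : ZMod 5) = 2 by decide] at this
  rw [this]; norm_num

lemma A3 : ZMod.toAddCircle (3 : ZMod 5) = -((2/5 : ℝ) : UnitAddCircle) := by
  rw [show (3 : ZMod 5) = -2 by decide, map_neg, A2]

lemma A4 : ZMod.toAddCircle (4 : ZMod 5) = -((1/5 : ℝ) : UnitAddCircle) := by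
  rw [show (4 : ZMod 5) = -1 by decide, map_neg, A1]

lemma sum_expZeta (s : ℂ) :
    ∑ j : ZMod 5, Phi τ j * expZeta (ZMod.toAddCircle j) s
      = 2 * I * (sinZeta ((1/5 : ℝ) : UnitAddCircle) s
          + (τ:ℂ) * sinZeta ((2/5 : ℝ) : UnitAddCircle) s) := by
  rw [sum_expand τ (fun j => expZeta (ZMod.toAddCircle j) s), A1, A2, A3, A4]
  simp only [expZeta, cosZeta_neg, sinZeta_neg]
  ring

lemma A3' : ZMod.toAddCircle (3 : ZMod 5) = ((3/5 : ℝ) : UnitAddCircle) := by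
  have := ZMod.toAddCircle_intCast (N := 5) 3
  rw [show ((3:ℤ) : ZMod 5) = 3 by decide] at this
  rw [this]; norm_num

lemma A4' : ZMod.toAddCircle (4 : ZMod 5) = ((4/5 : ℝ) : UnitAddCircle) := by
  have := ZMod.toAddCircle_intCast (N := 5) 4
  rw [show ((4:ℤ) : ZMod 5) = 4 by decide] at this
  rw [this]; norm_num

lemma fDH_eq (τ : ℝ) (s : ℂ) : fDH τ s = ZMod.LFunction (Phi τ) s := by
  rw [fDH, ZMod.LFunction, sum_expand τ (fun j => hurwitzZeta (ZMod.toAddCircle j) s),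
    A1, A2, A3', A4', show ((5:ℕ):ℂ) = (5:ℂ) by norm_num]
  ring

lemma bern_cast (x : ℝ) (n : ℕ) :
    ((Polynomial.bernoulli n).map (algebraMap ℚ ℂ)).eval ((x:ℂ)) =
      ((Polynomial.aeval x (Polynomial.bernoulli n) : ℝ) : ℂ) := by
  rw [Polynomial.aeval_def]
  have h : Complex.ofRealHom (Polynomial.eval₂ (algebraMap ℚ ℝ) x (Polynomial.bernoulli n))
      = Polynomial.eval₂ (Complex.ofRealHom.comp (algebraMap ℚ ℝ)) (Complex.ofRealHom x)
        (Polynomial.bernoulli n) := Polynomial.hom_eval₂ _ _ _ _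
  rw [Polynomial.eval_map,
    show ((Polynomial.eval₂ (algebraMap ℚ ℝ) x (Polynomial.bernoulli n) : ℝ) : ℂ)
    = ofRealHom (Polynomial.eval₂ (algebraMap ℚ ℝ) x (Polynomial.bernoulli n)) from rfl, h]
  congr 1

lemma fact_dfact (m : ℕ) : Nat.factorial (2*m+1) = Nat.doubleFactorial (2*m+1) * (2^m * Nat.factorial m) := by
  rw [← Nat.doubleFactorial_two_mul]
  exact Nat.factorial_eq_mul_doubleFactorial (2*m)

lemma main_eval (hτ : goldenPhi + τ = ε * Real.sqrt (1 + goldenPhi ^ 2))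
    (hε : ε = 1 ∨ ε = -1) (m : ℕ) (hm : 1 ≤ m) :
    xiDH τ (2*m+1) = -((ε * dhOddValue τ m : ℝ) : ℂ) := by
  have hm0 : m ≠ 0 := by omega
  have hs1 : (2*(m:ℂ)+1 : ℂ) ≠ 1 := by
    intro h
    have : (m:ℂ) = 0 := by linear_combination h/2
    exact hm0 (by exact_mod_cast this)
  have hkey : ((ε * Real.sqrt 5 : ℝ):ℂ) * I * fDH τ (2*(m:ℂ)+1)
      = 2*I*(sinZeta ((1/5:ℝ):UnitAddCircle) (2*(m:ℂ)+1)
        + (τ:ℂ) * sinZeta ((2/5:ℝ):UnitAddCircle) (2*(m:ℂ)+1)) := by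
    rw [fDH_eq, ← key hτ hε hs1, sum_expZeta]
  have hx1 : (1/5 : ℝ) ∈ Set.Icc (0:ℝ) 1 := by norm_num
  have hx2 : (2/5 : ℝ) ∈ Set.Icc (0:ℝ) 1 := by norm_num
  have hsin1 := sinZeta_two_mul_nat_add_one hm0 hx1
  have hsin2 := sinZeta_two_mul_nat_add_one hm0 hx2
  have hGamma : Complex.Gamma ((1+(2*(m:ℂ)+1))/2) = (Nat.factorial m : ℂ) := by
    rw [show (1+(2*(m:ℂ)+1))/2 = (m:ℂ)+1 by push_cast; ring]
    exact_mod_cast Complex.Gamma_nat_eq_factorial m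
  have hrpow : (Real.pi/5 : ℝ) ^ (-(2*(m:ℝ)+1)/2 : ℝ)
      = Real.sqrt 5 * 5^m / (Real.pi^m * Real.sqrt Real.pi) := by
    have ha : (0:ℝ) < Real.pi/5 := by positivity
    have hpi : (0:ℝ) < Real.pi := Real.pi_pos
    have hP : (0:ℝ) < Real.sqrt Real.pi := Real.sqrt_pos.mpr hpi
    have h5 : (0:ℝ) < Real.sqrt 5 := by positivity
    rw [show (-(2*(m:ℝ)+1)/2 : ℝ) = -(((m:ℕ):ℝ) + 1/2) by push_cast; ring,
      Real.rpow_neg ha.le, Real.rpow_add ha, Real.rpow_natCast,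
      ← Real.sqrt_eq_rpow, Real.sqrt_div (by positivity : (0:ℝ) ≤ Real.pi),
      div_pow]
    rw [inv_eq_iff_eq_inv, inv_div]
    field_simp
  have hpowM : ((Real.pi/5 : ℝ):ℂ) ^ (-(2*(m:ℂ)+1)/2)
      * (((Real.pi:ℝ):ℂ)^m * ((Real.sqrt Real.pi:ℝ):ℂ))
      = ((Real.sqrt 5 : ℝ):ℂ) * 5^m := by
    rw [show (-(2*(m:ℂ)+1)/2 : ℂ) = (((-(2*(m:ℝ)+1)/2 : ℝ)):ℂ) by push_cast; ring,
      ← Complex.ofReal_cpow (by positivity) _, hrpow]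
    have hpine : ((Real.pi:ℝ):ℂ) ≠ 0 := Complex.ofReal_ne_zero.mpr Real.pi_ne_zero
    have hPne : ((Real.sqrt Real.pi : ℝ):ℂ) ≠ 0 := by
      simp only [ne_eq, Complex.ofReal_eq_zero]
      positivity
    have hpm : ((Real.pi:ℝ):ℂ)^m ≠ 0 := pow_ne_zero _ hpine
    push_cast
    field_simp
  have hc0 : ((ε * Real.sqrt 5 : ℝ):ℂ) * I ≠ 0 := by
    have hε0 : ε ≠ 0 := by rcases hε with rfl | rfl <;> norm_num
    have h5 : Real.sqrt 5 ≠ 0 := by positivity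
    exact mul_ne_zero (Complex.ofReal_ne_zero.mpr (mul_ne_zero hε0 h5)) Complex.I_ne_zero
  have hππ : (((Real.pi:ℝ):ℂ)^m * ((Real.sqrt Real.pi:ℝ):ℂ)) ≠ 0 := by
    have hpine : ((Real.pi:ℝ):ℂ) ≠ 0 := Complex.ofReal_ne_zero.mpr Real.pi_ne_zero
    have hPne : ((Real.sqrt Real.pi : ℝ):ℂ) ≠ 0 := by
      simp only [ne_eq, Complex.ofReal_eq_zero]
      positivity
    exact mul_ne_zero (pow_ne_zero _ hpine) hPne
  apply mul_left_cancel₀ hc0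
  rw [xiDH, hGamma]
  apply mul_left_cancel₀ hππ
  have hfact : ((Nat.factorial (2*m+1) : ℕ) : ℂ)
      = ((Nat.doubleFactorial (2*m+1) : ℕ) : ℂ) * (2^m * ((Nat.factorial m : ℕ) : ℂ)) := by
    exact_mod_cast fact_dfact m
  have hP2 : ((Real.pi : ℝ):ℂ) = ((Real.sqrt Real.pi : ℝ):ℂ)^2 := by
    rw [← Complex.ofReal_pow]; norm_cast
    exact (Real.sq_sqrt Real.pi_pos.le).symm
  have hPne : ((Real.sqrt Real.pi : ℝ):ℂ) ≠ 0 := by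
    simp only [ne_eq, Complex.ofReal_eq_zero]; positivity
  have hQne : ((Real.sqrt 5 : ℝ):ℂ) ≠ 0 := by
    simp only [ne_eq, Complex.ofReal_eq_zero]; positivity
  have hdfne : ((Nat.doubleFactorial (2*m+1) : ℕ) : ℂ) ≠ 0 := by
    exact_mod_cast Nat.cast_ne_zero.mpr (Nat.doubleFactorial_pos _).ne'
  have hmfne : ((Nat.factorial m : ℕ) : ℂ) ≠ 0 :=
    Nat.cast_ne_zero.mpr (Nat.factorial_pos m).ne'
  have hfne : ((Nat.factorial (2*m+1) : ℕ) : ℂ) ≠ 0 :=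
    Nat.cast_ne_zero.mpr (Nat.factorial_pos _).ne'
  calc (((Real.pi:ℝ):ℂ)^m * ((Real.sqrt Real.pi:ℝ):ℂ)) * (((ε * Real.sqrt 5 : ℝ):ℂ) * I *
        (((Real.pi/5 : ℝ):ℂ) ^ (-(2*(m:ℂ)+1)/2) *
          (Nat.factorial m : ℂ) * fDH τ (2*(m:ℂ)+1)))
      = (((Real.pi/5 : ℝ):ℂ) ^ (-(2*(m:ℂ)+1)/2)
          * (((Real.pi:ℝ):ℂ)^m * ((Real.sqrt Real.pi:ℝ):ℂ))) *
          ((Nat.factorial m : ℂ) * (((ε * Real.sqrt 5 : ℝ):ℂ) * I * fDH τ (2*(m:ℂ)+1))) := by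
        ring
    _ = (((Real.sqrt 5 : ℝ):ℂ) * 5^m) *
          ((Nat.factorial m : ℂ) * (2*I*(sinZeta ((1/5:ℝ):UnitAddCircle) (2*(m:ℂ)+1)
        + (τ:ℂ) * sinZeta ((2/5:ℝ):UnitAddCircle) (2*(m:ℂ)+1)))) := by
        rw [hpowM, hkey]
    _ = (((Real.pi:ℝ):ℂ)^m * ((Real.sqrt Real.pi:ℝ):ℂ)) *
          (((ε * Real.sqrt 5 : ℝ):ℂ) * I * -((ε * dhOddValue τ m : ℝ) : ℂ)) := by
        rw [hsin1, hsin2, bern_cast, bern_cast, dhOddValue]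
        push_cast
        rw [show ((10:ℂ)*((Real.pi:ℝ):ℂ))^m = 2^m*5^m*((Real.pi:ℝ):ℂ)^m by
            rw [mul_pow, show (10:ℂ) = 2*5 by norm_num, mul_pow], hP2]
        rcases hε with rfl | rfl <;>
        · push_cast
          field_simp
          rw [hfact]
          ring

/-- For every integer `m ≥ 1`,
`ξ_±(2m+1) = ∓(2·(-1)^m/(2m+1)!!)·[B_{2m+1}(1/5) + τ_±·B_{2m+1}(2/5)]·√π·(10π)^m`. -/
theorem stmt_18 (m : ℕ) (hm : 1 ≤ m) :
    xiDH tauPlus (2 * m + 1) = -((dhOddValue tauPlus m : ℝ) : ℂ) ∧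
    xiDH tauMinus (2 * m + 1) = ((dhOddValue tauMinus m : ℝ) : ℂ) := by
  constructor
  · have h := main_eval (τ := tauPlus) (ε := 1)
      (by rw [tauPlus]; ring) (Or.inl rfl) m hm
    rw [h, one_mul]
  · have h := main_eval (τ := tauMinus) (ε := -1)
      (by rw [tauMinus]; ring) (Or.inr rfl) m hm
    rw [h]
    push_cast
    ring
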